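/- If a Tychonoff space X is I-favorable, then every compactification of X is I-favorable; that is, for every compact Hausdorff space cX containing X as a dense subspace, cX is I-favorable. -/

import Mathlib

/-- A topological space `X` is I-favorable if there is a strategy `σ` assigning to each
finite (possibly empty) sequence of open subsets of `X` an open subset of `X` such that
whenever `B₀, B₁, …` are nonempty open sets with `B₀ ⊆ σ ∅` and `B_{k+1} ⊆ σ (B₀,…,B_k)`,
the union `⋃ k, B k` is dense in `X`. (For the empty space the nonemptiness requirement
on the values of `σ` is vacuous.) -/
def IFavorable (X : Type*) [TopologicalSpace X] : Prop :=
  ∃ σ : List (Set X) → Set X,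
    (∀ l, IsOpen (σ l)) ∧
    (∀ l, Nonempty X → (σ l).Nonempty) ∧
    ∀ B : ℕ → Set X, (∀ k, IsOpen (B k)) → (∀ k, (B k).Nonempty) →
      B 0 ⊆ σ [] →
      (∀ k, B (k + 1) ⊆ σ (List.ofFn fun i : Fin (k + 1) => B i)) →
      Dense (⋃ k, B k)

/-- If a Tychonoff space `X` is I-favorable, then every compactification
of `X` is I-favorable: for every compact Hausdorff space `cX` containing `X` as a dense
subspace (via a dense topological embedding `i`), `cX` is I-favorable. -/
theorem ifavorable_compactification {X : Type u} [TopologicalSpace X] [T35Space X]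
    (hX : IFavorable X) (cX : Type v) [TopologicalSpace cX] [CompactSpace cX] [T2Space cX]
    (i : X → cX) (hi : Topology.IsEmbedding i) (hd : DenseRange i) :
    IFavorable cX := by
  obtain ⟨σ, hσo, hσne, hσ⟩ := hX
  refine ⟨fun l => ⋃₀ {W | IsOpen W ∧ i ⁻¹' W ⊆ σ (l.map (Set.preimage i))}, ?_, ?_, ?_⟩
  · exact fun l => isOpen_sUnion fun W hW => hW.1
  · rintro l ⟨c⟩
    have hXne : Nonempty X := by
      rcases hd.inter_open_nonempty Set.univ isOpen_univ ⟨c, trivial⟩ with ⟨y, -, x, hx⟩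
      exact ⟨x⟩
    obtain ⟨x, hx⟩ := hσne (l.map (Set.preimage i)) hXne
    obtain ⟨V, hVo, hV⟩ := hi.toIsInducing.isOpen_iff.mp (hσo (l.map (Set.preimage i)))
    exact ⟨i x, V, ⟨hVo, hV.le⟩, by rw [← hV] at hx; exact hx⟩
  · intro B hBo hBne hB0 hBk
    have hpre : ∀ l : List (Set cX),
        i ⁻¹' (⋃₀ {W | IsOpen W ∧ i ⁻¹' W ⊆ σ (l.map (Set.preimage i))})
          ⊆ σ (l.map (Set.preimage i)) := by
      intro l x hx
      rw [Set.preimage_sUnion] at hx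
      simp only [Set.mem_iUnion] at hx
      obtain ⟨W, hW, hxW⟩ := hx
      exact hW.2 hxW
    set B' : ℕ → Set X := fun k => i ⁻¹' B k with hB'
    have hdense : Dense (⋃ k, B' k) := by
      apply hσ
      · exact fun k => (hBo k).preimage hi.continuous
      · intro k
        obtain ⟨y, hy, x, hx⟩ := hd.inter_open_nonempty (B k) (hBo k) (hBne k)
        exact ⟨x, by simpa [hB', hx] using hy⟩
      · intro x hx
        simpa using hpre [] (hB0 hx)
      · intro k x hx
        have := hpre (List.ofFn fun j : Fin (k + 1) => B j) (hBk k hx)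
        rw [List.map_ofFn] at this
        exact this
    have himg : Dense (i '' ⋃ k, B' k) := hd.dense_image hi.continuous hdense
    refine himg.mono ?_
    rintro y ⟨x, hx, rfl⟩
    simp only [Set.mem_iUnion] at hx ⊢
    obtain ⟨k, hk⟩ := hx
    exact ⟨k, hk⟩
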